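/- The inverse Mills ratio λ(ν) = φ(ν)/Φ(ν) is strictly decreasing on ℝ. -/

import Mathlib

open MeasureTheory Real Set Filter

noncomputable def stdPdf (x : ℝ) : ℝ := (Real.sqrt (2 * Real.pi))⁻¹ * Real.exp (-(x ^ 2) / 2)

noncomputable def stdCdf (x : ℝ) : ℝ := ∫ v in Set.Iio x, stdPdf v

noncomputable def Phi2 (μ ν ρ : ℝ) : ℝ :=
  ∫ v in Set.Iio μ, stdCdf ((ν - ρ * v) / Real.sqrt (1 - ρ ^ 2)) * stdPdf v

noncomputable def phi2 (μ ν ρ : ℝ) : ℝ :=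
  (2 * Real.pi * Real.sqrt (1 - ρ ^ 2))⁻¹ *
    Real.exp (-(μ ^ 2 - 2 * ρ * μ * ν + ν ^ 2) / (2 * (1 - ρ ^ 2)))

lemma stdPdf_pos (x : ℝ) : 0 < stdPdf x := by
  have h : (0:ℝ) < Real.sqrt (2 * Real.pi) := Real.sqrt_pos.2 (by positivity)
  exact mul_pos (inv_pos.2 h) (Real.exp_pos _)

lemma stdPdf_eq : stdPdf = fun x => (Real.sqrt (2 * Real.pi))⁻¹ * Real.exp (-(1/2) * x ^ 2) := by
  funext x; simp only [stdPdf]; ring_nf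

lemma stdPdf_continuous : Continuous stdPdf := by
  unfold stdPdf; fun_prop

lemma stdPdf_integrable : Integrable stdPdf := by
  rw [stdPdf_eq]
  exact (integrable_exp_neg_mul_sq (by norm_num : (0:ℝ) < 1/2)).const_mul _

lemma id_mul_stdPdf_integrable : Integrable (fun t => t * stdPdf t) := by
  have h := (integrable_mul_exp_neg_mul_sq (by norm_num : (0:ℝ) < 1/2)).const_mul
    ((Real.sqrt (2 * Real.pi))⁻¹)
  refine h.congr (Filter.Eventually.of_forall fun x => ?_)
  simp only [stdPdf]; ring_nf

lemma stdPdf_hasDerivAt (x : ℝ) : HasDerivAt stdPdf (-x * stdPdf x) x := by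
  have h1 : HasDerivAt (fun t : ℝ => -(t ^ 2) / 2) (-x) x := by
    have := ((hasDerivAt_pow 2 x).neg.div_const 2)
    simpa using this.congr_deriv (by ring)
  have h2 := (h1.exp).const_mul ((Real.sqrt (2 * Real.pi))⁻¹)
  exact h2.congr_deriv (by simp [stdPdf]; ring)

lemma stdCdf_eq_Iic (x : ℝ) : stdCdf x = ∫ v in Set.Iic x, stdPdf v :=
  (integral_Iic_eq_integral_Iio).symm

lemma stdCdf_pos (x : ℝ) : 0 < stdCdf x := by
  rw [stdCdf]
  rw [setIntegral_pos_iff_support_of_nonneg_ae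
    (Filter.Eventually.of_forall fun t => (stdPdf_pos t).le) stdPdf_integrable.integrableOn]
  have : Function.support stdPdf ∩ Set.Iio x = Set.Iio x := by
    apply Set.inter_eq_self_of_subset_right
    intro t _
    exact (stdPdf_pos t).ne'
  rw [this]
  simp [Real.volume_Iio]

lemma stdCdf_hasDerivAt (x : ℝ) : HasDerivAt stdCdf (stdPdf x) x := by
  have key : stdCdf = fun y => stdCdf 0 + ∫ t in (0:ℝ)..y, stdPdf t := by
    funext y
    rw [stdCdf_eq_Iic, stdCdf_eq_Iic]
    have h := intervalIntegral.integral_Iic_sub_Iic (a := 0) (b := y)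
      stdPdf_integrable.integrableOn stdPdf_integrable.integrableOn
    linarith
  rw [key]
  exact ((intervalIntegral.integral_hasDerivAt_right
    stdPdf_integrable.intervalIntegrable
    (stdPdf_continuous.stronglyMeasurableAtFilter _ _)
    stdPdf_continuous.continuousAt).const_add _)

lemma stdPdf_tendsto_atBot : Tendsto stdPdf atBot (nhds 0) := by
  rw [stdPdf_eq]
  have h1 : Tendsto (fun x : ℝ => x ^ 2) atBot atTop := by
    apply tendsto_atTop_mono (f := fun x : ℝ => -x + -1)
    · intro x; nlinarith [sq_nonneg (x + 1/2)]
    · exact tendsto_atTop_add_const_right _ (-1) tendsto_neg_atBot_atTop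
  have h2 : Tendsto (fun x : ℝ => Real.exp (-(1/2) * x ^ 2)) atBot (nhds 0) := by
    apply Real.tendsto_exp_atBot.comp
    have := tendsto_neg_atTop_atBot.comp h1
    refine (this.atBot_mul_const (by norm_num : (0:ℝ) < 1/2)).congr fun x => ?_
    simp; ring
  simpa using h2.const_mul ((Real.sqrt (2 * Real.pi))⁻¹)

lemma integral_id_mul_stdPdf (x : ℝ) : ∫ t in Set.Iio x, t * stdPdf t = -stdPdf x := by
  rw [← integral_Iic_eq_integral_Iio]
  have := integral_Iic_of_hasDerivAt_of_tendsto' (f := fun t => -stdPdf t)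
    (f' := fun t => t * stdPdf t) (a := x) (m := 0)
    (fun t _ => by exact (stdPdf_hasDerivAt t).neg.congr_deriv (by ring))
    id_mul_stdPdf_integrable.integrableOn
    (by simpa using stdPdf_tendsto_atBot.neg)
  simpa using this

lemma mills_aux_nonneg (x : ℝ) : 0 ≤ x * stdCdf x + stdPdf x := by
  have h : ∫ t in Set.Iio x, t * stdPdf t ≤ ∫ t in Set.Iio x, x * stdPdf t := by
    apply setIntegral_mono_on id_mul_stdPdf_integrable.integrableOn
      (stdPdf_integrable.const_mul x).integrableOn measurableSet_Iio
    intro t ht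
    exact mul_le_mul_of_nonneg_right (le_of_lt ht) (stdPdf_pos t).le
  rw [integral_id_mul_stdPdf, integral_const_mul] at h
  have : (x : ℝ) * stdCdf x = x * ∫ t in Set.Iio x, stdPdf t := rfl
  linarith [h]

lemma mills_aux_hasDerivAt (x : ℝ) :
    HasDerivAt (fun y => y * stdCdf y + stdPdf y) (stdCdf x) x := by
  have h := ((hasDerivAt_id x).mul (stdCdf_hasDerivAt x)).add (stdPdf_hasDerivAt x)
  exact h.congr_deriv (by simp only [id_eq]; ring)

lemma mills_aux_pos (x : ℝ) : 0 < x * stdCdf x + stdPdf x := by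
  have hsm : StrictMono (fun y => y * stdCdf y + stdPdf y) :=
    strictMono_of_hasDerivAt_pos mills_aux_hasDerivAt fun y => stdCdf_pos y
  calc (0:ℝ) ≤ (x - 1) * stdCdf (x - 1) + stdPdf (x - 1) := mills_aux_nonneg _
    _ < x * stdCdf x + stdPdf x := hsm (by linarith)

theorem stmt8 : StrictAnti (fun ν => stdPdf ν / stdCdf ν) := by
  apply strictAnti_of_hasDerivAt_neg
    (f' := fun x => (-x * stdPdf x * stdCdf x - stdPdf x * stdPdf x) / (stdCdf x) ^ 2)
  · intro x
    exact (stdPdf_hasDerivAt x).div (stdCdf_hasDerivAt x) (stdCdf_pos x).ne'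
  · intro x
    apply div_neg_of_neg_of_pos
    · have := mul_pos (stdPdf_pos x) (mills_aux_pos x)
      nlinarith
    · exact pow_pos (stdCdf_pos x) 2
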